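/- Let n1, n2, n3, n4, m be nonnegative integers with n1 > n2, n4 ≥ n3, and m ≤ n2; let q = max(n1, n2, n3, n4, m) and let Q be the q×q shift matrix over 𝔽₂. Then there exist q×q matrices G_A, G_B over 𝔽₂ such that, with G_S = Q^{q−n3} G_A Q^{q−n1} + Q^{q−n4} G_B Q^{q−n2} and G_M = Q^{q−n3} G_A Q^{q−m} + Q^{q−n4} G_B Q^{q−m}, one has G_M = 0 and rank(G_S) − dim(range(G_S) ∩ range(G_M)) = min(n1, n4, n2 + n3 − m). -/

import Mathlib

/-- The `q × q` lower shift matrix over `𝔽₂`: entry `(i, j)` is `1` iff `i = j + 1`. -/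
def shiftQ (q : ℕ) : Matrix (Fin q) (Fin q) (ZMod 2) :=
  Matrix.of fun i j => if (i : ℕ) = (j : ℕ) + 1 then 1 else 0

/-- Source-to-destination transfer matrix
`G_S = Q^(q-n3) G_A Q^(q-n1) + Q^(q-n4) G_B Q^(q-n2)`. -/
def GSmat (q n1 n2 n3 n4 : ℕ) (GA GB : Matrix (Fin q) (Fin q) (ZMod 2)) :
    Matrix (Fin q) (Fin q) (ZMod 2) :=
  shiftQ q ^ (q - n3) * GA * shiftQ q ^ (q - n1) +
    shiftQ q ^ (q - n4) * GB * shiftQ q ^ (q - n2)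

/-- Interference transfer matrix
`G_M = Q^(q-n3) G_A Q^(q-m) + Q^(q-n4) G_B Q^(q-m)`. -/
def GMmat (q n3 n4 m : ℕ) (GA GB : Matrix (Fin q) (Fin q) (ZMod 2)) :
    Matrix (Fin q) (Fin q) (ZMod 2) :=
  shiftQ q ^ (q - n3) * GA * shiftQ q ^ (q - m) +
    shiftQ q ^ (q - n4) * GB * shiftQ q ^ (q - m)

/-- The achievable rate `rank G_S - dim (range G_S ∩ range G_M)` of a linear scheme. -/
noncomputable def linRate (q : ℕ) (GS GM : Matrix (Fin q) (Fin q) (ZMod 2)) : ℕ :=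
  GS.rank - Module.finrank (ZMod 2)
    ↥(LinearMap.range GS.mulVecLin ⊓ LinearMap.range GM.mulVecLin)

lemma shiftQ_pow_apply (q p : ℕ) (i j : Fin q) :
    (shiftQ q ^ p) i j = if (i : ℕ) = (j : ℕ) + p then 1 else 0 := by
  induction p generalizing j with
  | zero => simp [Matrix.one_apply, Fin.ext_iff]
  | succ p ih =>
    rw [pow_succ, Matrix.mul_apply]
    by_cases h : (j : ℕ) + 1 < q
    · rw [Finset.sum_eq_single (⟨(j:ℕ)+1, h⟩ : Fin q)]
      · rw [ih]
        have h1 : shiftQ q ⟨(j:ℕ)+1, h⟩ j = 1 := by simp [shiftQ]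
        rw [h1, mul_one]
        simp only [Fin.val_mk]
        rw [if_congr (show ((i:ℕ) = (j:ℕ) + 1 + p) ↔ ((i:ℕ) = (j:ℕ) + (p+1)) by omega) rfl rfl]
      · intro b _ hb
        simp only [shiftQ, Matrix.of_apply]
        rw [if_neg, mul_zero]
        intro hbj; exact hb (Fin.ext (by simpa using hbj))
      · simp
    · rw [Finset.sum_eq_zero, if_neg (by omega)]
      intro b _
      simp only [shiftQ, Matrix.of_apply]
      rw [if_neg (by omega), mul_zero]

lemma left_shift_apply (q p : ℕ) (F : ℕ → ℕ → ZMod 2) (i b : Fin q) :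
    (shiftQ q ^ p * Matrix.of (fun a c : Fin q => F (a : ℕ) (c : ℕ))) i b
      = if p ≤ (i : ℕ) then F ((i : ℕ) - p) (b : ℕ) else 0 := by
  rw [Matrix.mul_apply]
  by_cases h : p ≤ (i : ℕ)
  · rw [Finset.sum_eq_single (⟨(i:ℕ)-p, by omega⟩ : Fin q)]
    · rw [shiftQ_pow_apply, if_pos (by simp; omega), one_mul, if_pos h]
      simp
    · intro a _ ha
      rw [shiftQ_pow_apply, if_neg, zero_mul]
      intro hc; exact ha (Fin.ext (by simp; omega))
    · simp
  · rw [Finset.sum_eq_zero, if_neg h]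
    intro a _
    rw [shiftQ_pow_apply, if_neg (by omega), zero_mul]

lemma right_shift_apply (q s : ℕ) (M : Matrix (Fin q) (Fin q) (ZMod 2)) (i j : Fin q) :
    (M * shiftQ q ^ s) i j = if h : (j : ℕ) + s < q then M i ⟨(j:ℕ)+s, h⟩ else 0 := by
  rw [Matrix.mul_apply]
  by_cases h : (j : ℕ) + s < q
  · rw [dif_pos h, Finset.sum_eq_single (⟨(j:ℕ)+s, h⟩ : Fin q)]
    · rw [shiftQ_pow_apply, if_pos (by simp), mul_one]
    · intro b _ hb
      rw [shiftQ_pow_apply, if_neg, mul_zero]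
      intro hc; exact hb (Fin.ext (by simp; omega))
    · simp
  · rw [dif_neg h, Finset.sum_eq_zero]
    intro b _
    rw [shiftQ_pow_apply, if_neg (by omega), mul_zero]

lemma triple_shift_apply (q p s : ℕ) (F : ℕ → ℕ → ZMod 2) (i j : Fin q) :
    (shiftQ q ^ p * Matrix.of (fun a c : Fin q => F (a : ℕ) (c : ℕ)) * shiftQ q ^ s) i j
      = if p ≤ (i : ℕ) ∧ (j : ℕ) + s < q then F ((i : ℕ) - p) ((j : ℕ) + s) else 0 := by
  rw [right_shift_apply]
  by_cases h : (j : ℕ) + s < q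
  · rw [dif_pos h, left_shift_apply]
    by_cases h2 : p ≤ (i : ℕ)
    · rw [if_pos h2, if_pos ⟨h2, h⟩]
    · rw [if_neg h2, if_neg (by tauto)]
  · rw [dif_neg h, if_neg (by tauto)]

namespace RateAux3

/-- chain function -/
def cFun (q n1 n2 t : ℕ) (j i : ℕ) : ZMod 2 :=
  if q ≤ i + t ∧ q + j ≤ i + n1 ∧ (n1 - n2) ∣ (i + n1 - (q + j)) then 1 else 0

def aFun (q n1 n2 m t : ℕ) (j i : ℕ) : ZMod 2 :=
  if j + m < n1 then
    (if n1 ≤ j + t ∧ i + n1 = q + j then 1 else 0)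
      + (if n2 ≤ j + m then cFun q n1 n2 t (j + (n1 - n2)) i else 0)
  else cFun q n1 n2 t j i

def bFun (q n1 n2 m t u : ℕ) (j i : ℕ) : ZMod 2 :=
  if j < u then (if i + 1 + j + t = q then 1 else 0)
  else if n2 ≤ j + m then cFun q n1 n2 t (j + (n1 - n2)) i else 0

lemma add_self (x : ZMod 2) : x + x = 0 := by revert x; decide

lemma c_supp {q n1 n2 t j i : ℕ} (h : ¬ q ≤ i + t) : cFun q n1 n2 t j i = 0 :=
  if_neg (by tauto)

lemma c_hi {q n1 n2 t j i : ℕ} (h12 : n2 < n1) (hj : n2 ≤ j) (hi : i < q) :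
    cFun q n1 n2 t (j + (n1 - n2)) i = 0 :=
  if_neg (by rintro ⟨-, h2, -⟩; omega)

lemma c_rec {q n1 n2 t : ℕ} (h12 : n2 < n1) {i : ℕ} (j : ℕ) (hi : i < q) :
    cFun q n1 n2 t j i
      = (if n1 ≤ j + t ∧ j < n1 ∧ i + n1 = q + j then 1 else 0)
        + cFun q n1 n2 t (j + (n1 - n2)) i := by
  unfold cFun
  by_cases h1 : q ≤ i + t
  · by_cases h2 : q + j ≤ i + n1
    · by_cases h3 : (n1 - n2) ∣ (i + n1 - (q + j))
      · rw [if_pos ⟨h1, h2, h3⟩]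
        by_cases h4 : i + n1 = q + j
        · rw [if_pos ⟨by omega, by omega, h4⟩, if_neg (by rintro ⟨-, h5, -⟩; omega)]
          simp
        · have h5 : n1 - n2 ≤ i + n1 - (q + j) := Nat.le_of_dvd (by omega) h3
          have h6 : (n1 - n2) ∣ (i + n1 - (q + (j + (n1 - n2)))) := by
            have h7 := Nat.dvd_sub h3 (dvd_refl (n1 - n2))
            rwa [show i + n1 - (q + j) - (n1 - n2) = i + n1 - (q + (j + (n1 - n2))) from by
              omega] at h7
          rw [if_neg (by rintro ⟨-, -, h7⟩; omega), if_pos ⟨h1, by omega, h6⟩]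
          simp
      · rw [if_neg (by tauto), if_neg, if_neg]
        · simp
        · rintro ⟨-, h7, h8⟩
          refine h3 ?_
          have h9 := Nat.dvd_add h8 (dvd_refl (n1 - n2))
          rwa [show i + n1 - (q + (j + (n1 - n2))) + (n1 - n2) = i + n1 - (q + j) from by
            omega] at h9
        · rintro ⟨-, -, h7⟩
          refine h3 ?_
          rw [show i + n1 - (q + j) = 0 from by omega]
          exact dvd_zero _
    · rw [if_neg (by rintro ⟨-, h7, -⟩; omega), if_neg (by rintro ⟨-, -, h7⟩; omega),
        if_neg (by rintro ⟨-, h7, -⟩; omega)]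
      simp
  · rw [if_neg (by tauto), if_neg (by rintro ⟨h7, -, h8⟩; omega), if_neg (by tauto)]
    simp

lemma a_supp {q n1 n2 m t j i : ℕ} (h : ¬ q ≤ i + t) : aFun q n1 n2 m t j i = 0 := by
  unfold aFun
  split
  · rw [if_neg (by rintro ⟨h1, h2⟩; omega), c_supp (t := t) h, ite_self, add_zero]
  · exact c_supp h

lemma b_supp {q n1 n2 m t u j i : ℕ} (h : ¬ q ≤ i + t + u) : bFun q n1 n2 m t u j i = 0 := by
  unfold bFun
  split
  · rw [if_neg (by omega)]
  · split
    · exact c_supp (by omega)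
    · rfl

/-- The target matrix. -/
def Tmat (q n1 t u : ℕ) : Matrix (Fin q) (Fin q) (ZMod 2) :=
  Matrix.of fun i j =>
    if (n1 ≤ (j:ℕ) + t ∧ (j:ℕ) < n1 ∧ (i:ℕ) + n1 = q + (j:ℕ))
        ∨ ((j:ℕ) < u ∧ (i:ℕ) + 1 + (j:ℕ) + t = q) then 1 else 0

section Main

variable {n1 n2 n3 n4 m q t u : ℕ}
  (hq1 : n1 ≤ q) (hq2 : n2 ≤ q) (hq3 : n3 ≤ q) (hq4 : n4 ≤ q)
  (h12 : n2 < n1) (h34 : n3 ≤ n4) (hm : m ≤ n2)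
  (htn3 : t ≤ n3) (htu4 : t + u ≤ n4) (htu1 : t + u ≤ n1) (hu1 : u ≤ n2 - m)

include hq1 hq2 hq3 hq4 h12 h34 hm htn3 htu4 htu1 hu1

/-- entrywise: `G_M = 0`. -/
lemma gm_entry (i j : ℕ) (hi : i < q) :
    (if q - n3 ≤ i ∧ j + (q - m) < q then
        aFun q n1 n2 m t ((j + (q - m)) - (q - n1)) ((i - (q - n3)) + (q - n3)) else 0)
    + (if q - n4 ≤ i ∧ j + (q - m) < q then
        bFun q n1 n2 m t u ((j + (q - m)) - (q - n2)) ((i - (q - n4)) + (q - n4)) else 0)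
      = 0 := by
  by_cases hj : j < m
  · have e1 : (j + (q - m)) - (q - n1) = j + (n1 - m) := by omega
    have e2 : (j + (q - m)) - (q - n2) = j + (n2 - m) := by omega
    have ha : ∀ i' : ℕ, aFun q n1 n2 m t (j + (n1 - m)) i' = cFun q n1 n2 t (j + (n1 - m)) i' := by
      intro i'
      unfold aFun
      rw [if_neg (by omega)]
    have hb : ∀ i' : ℕ, bFun q n1 n2 m t u (j + (n2 - m)) i' = cFun q n1 n2 t (j + (n1 - m)) i' := by
      intro i'
      unfold bFun
      rw [if_neg (by omega), if_pos (by omega),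
        show j + (n2 - m) + (n1 - n2) = j + (n1 - m) from by omega]
    by_cases hc : cFun q n1 n2 t (j + (n1 - m)) i = 0
    · rw [e1, e2]
      by_cases g1 : q - n3 ≤ i ∧ j + (q - m) < q
      · rw [if_pos g1, show i - (q - n3) + (q - n3) = i from by omega, ha, hc]
        by_cases g2 : q - n4 ≤ i ∧ j + (q - m) < q
        · rw [if_pos g2, show i - (q - n4) + (q - n4) = i from by omega, hb, hc, add_zero]
        · rw [if_neg g2, add_zero]
      · rw [if_neg g1, zero_add]
        by_cases g2 : q - n4 ≤ i ∧ j + (q - m) < q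
        · rw [if_pos g2, show i - (q - n4) + (q - n4) = i from by omega, hb, hc]
        · rw [if_neg g2]
    · have hit : q ≤ i + t := by
        by_contra hcon
        exact hc (c_supp hcon)
      have g1 : q - n3 ≤ i ∧ j + (q - m) < q := by omega
      have g2 : q - n4 ≤ i ∧ j + (q - m) < q := by omega
      rw [if_pos g1, if_pos g2, e1, e2,
        show i - (q - n3) + (q - n3) = i from by omega,
        show i - (q - n4) + (q - n4) = i from by omega, ha, hb, add_self]
  · rw [if_neg (by omega), if_neg (by omega), add_zero]

/-- entrywise: `G_S = T`. -/
lemma gs_entry (i j : ℕ) (hi : i < q) :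
    (if q - n3 ≤ i ∧ j + (q - n1) < q then
        aFun q n1 n2 m t ((j + (q - n1)) - (q - n1)) ((i - (q - n3)) + (q - n3)) else 0)
    + (if q - n4 ≤ i ∧ j + (q - n2) < q then
        bFun q n1 n2 m t u ((j + (q - n2)) - (q - n2)) ((i - (q - n4)) + (q - n4)) else 0)
      = if (n1 ≤ j + t ∧ j < n1 ∧ i + n1 = q + j) ∨ (j < u ∧ i + 1 + j + t = q) then 1
        else 0 := by
  rw [Nat.add_sub_cancel, Nat.add_sub_cancel]
  by_cases hit : q ≤ i + t
  · -- row guards automatically satisfied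
    have e3 : i - (q - n3) + (q - n3) = i := by omega
    have e4 : i - (q - n4) + (q - n4) = i := by omega
    have eA : (if q - n3 ≤ i ∧ j + (q - n1) < q then aFun q n1 n2 m t j (i - (q - n3) + (q - n3)) else 0)
        = if j < n1 then aFun q n1 n2 m t j i else 0 := by
      rw [e3]
      by_cases hj : j < n1
      · rw [if_pos (by omega), if_pos hj]
      · rw [if_neg (by omega), if_neg hj]
    have eB : (if q - n4 ≤ i ∧ j + (q - n2) < q then bFun q n1 n2 m t u j (i - (q - n4) + (q - n4)) else 0)
        = if j < n2 then bFun q n1 n2 m t u j i else 0 := by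
      rw [e4]
      by_cases hj : j < n2
      · rw [if_pos (by omega), if_pos hj]
      · rw [if_neg (by omega), if_neg hj]
    rw [eA, eB]
    by_cases hj1 : j < n1
    · by_cases hj2 : j < n2
      · -- both terms present
        rw [if_pos hj1, if_pos hj2]
        by_cases hju : j < u
        · -- free region, b gives basis vector
          unfold aFun bFun
          rw [if_pos (show j + m < n1 from by omega),
            if_neg (show ¬ (n1 ≤ j + t ∧ i + n1 = q + j) from by omega),
            if_neg (show ¬ n2 ≤ j + m from by omega), if_pos hju]
          simp only [zero_add, add_zero]
          by_cases f2 : i + 1 + j + t = q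
          · rw [if_pos f2, if_pos (Or.inr ⟨hju, f2⟩)]
          · rw [if_neg f2, if_neg (by rintro (⟨h5, -, h6⟩ | ⟨-, h6⟩) <;> omega)]
        · -- u ≤ j < n2
          by_cases hjm : j + m < n1
          · unfold aFun bFun
            rw [if_pos hjm, if_neg hju]
            by_cases f3 : n2 ≤ j + m
            · rw [if_pos f3, add_assoc, add_self, add_zero]
              by_cases f1 : n1 ≤ j + t ∧ i + n1 = q + j
              · rw [if_pos f1, if_pos (by omega)]
              · rw [if_neg f1, if_neg (by omega)]
            · rw [if_neg f3, add_zero, add_zero]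
              by_cases f1 : n1 ≤ j + t ∧ i + n1 = q + j
              · rw [if_pos f1, if_pos (by omega)]
              · rw [if_neg f1, if_neg (by omega)]
          · -- tied region
            unfold aFun bFun
            rw [if_neg hjm, if_neg hju, if_pos (by omega),
              c_rec h12 j hi, add_assoc, add_self, add_zero]
            by_cases f1 : n1 ≤ j + t ∧ j < n1 ∧ i + n1 = q + j
            · rw [if_pos f1, if_pos (by omega)]
            · rw [if_neg f1, if_neg (by omega)]
      · -- n2 ≤ j < n1 : only a term
        rw [if_pos hj1, if_neg hj2, add_zero]
        by_cases hjm : j + m < n1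
        · unfold aFun
          rw [if_pos hjm]
          have : (if n2 ≤ j + m then cFun q n1 n2 t (j + (n1 - n2)) i else 0) = 0 := by
            split
            · exact c_hi h12 (by omega) hi
            · rfl
          rw [this, add_zero]
          by_cases f1 : n1 ≤ j + t ∧ i + n1 = q + j
          · rw [if_pos f1, if_pos (by omega)]
          · rw [if_neg f1, if_neg (by omega)]
        · unfold aFun
          rw [if_neg hjm, c_rec h12 j hi, c_hi h12 (by omega) hi, add_zero]
          by_cases f1 : n1 ≤ j + t ∧ j < n1 ∧ i + n1 = q + j
          · rw [if_pos f1, if_pos (by omega)]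
          · rw [if_neg f1, if_neg (by omega)]
    · -- j ≥ n1 : everything zero
      rw [if_neg hj1, if_neg (by omega), add_zero, if_neg (by omega)]
  · -- i above support of a
    have eA : (if q - n3 ≤ i ∧ j + (q - n1) < q then aFun q n1 n2 m t j (i - (q - n3) + (q - n3)) else 0) = 0 := by
      split
      · exact a_supp (by omega)
      · rfl
    rw [eA, zero_add]
    by_cases hitu : q ≤ i + t + u
    · -- only bFun's basis part can be nonzero
      by_cases f2 : j < u ∧ i + 1 + j + t = q
      · rw [if_pos (by omega), show i - (q - n4) + (q - n4) = i from by omega]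
        unfold bFun
        rw [if_pos f2.1, if_pos f2.2, if_pos (by tauto)]
      · rw [if_neg (show ¬ ((n1 ≤ j + t ∧ j < n1 ∧ i + n1 = q + j) ∨ (j < u ∧ i + 1 + j + t = q))
            from by rintro (⟨h5, -, h6⟩ | h6); exacts [by omega, f2 h6])]
        by_cases g2 : q - n4 ≤ i ∧ j + (q - n2) < q
        · rw [if_pos g2, show i - (q - n4) + (q - n4) = i from by omega]
          unfold bFun
          split
          · rw [if_neg (by omega)]
          · split
            · exact c_supp (by omega)
            · rfl
        · rw [if_neg g2]
    · have eB : (if q - n4 ≤ i ∧ j + (q - n2) < q then bFun q n1 n2 m t u j (i - (q - n4) + (q - n4)) else 0) = 0 := by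
        split
        · exact b_supp (by omega)
        · rfl
      rw [eB, if_neg (by rintro (⟨h5, -, h6⟩ | ⟨h5, h6⟩) <;> omega)]

end Main

lemma Tmat_rank {n1 q t u : ℕ} (hq1 : n1 ≤ q) (htu1 : t + u ≤ n1) :
    (Tmat q n1 t u).rank = t + u := by
  classical
  set r := t + u with hr
  have hrq : r ≤ q := by omega
  have key : LinearMap.range (Tmat q n1 t u).mulVecLin
      = Submodule.span (ZMod 2)
        (Set.range fun x : {i : Fin q // q ≤ (i : ℕ) + r} =>
          (Pi.single x.1 (1 : ZMod 2) : Fin q → ZMod 2)) := by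
    rw [Matrix.range_mulVecLin]
    apply le_antisymm
    · rw [Submodule.span_le]
      rintro _ ⟨j, rfl⟩
      by_cases h1 : n1 ≤ (j : ℕ) + t ∧ (j : ℕ) < n1
      · have hiq : q + (j : ℕ) - n1 < q := by omega
        have hcol : (Tmat q n1 t u).transpose j = Pi.single (⟨q + (j : ℕ) - n1, hiq⟩ : Fin q) 1 := by
          funext i'
          simp only [Tmat, Matrix.transpose_apply, Matrix.of_apply, Pi.single_apply]
          rw [if_congr (show _ ↔ i' = (⟨q + (j : ℕ) - n1, hiq⟩ : Fin q) from by
            rw [Fin.ext_iff]; simp only [Fin.val_mk]; omega) rfl rfl]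
        rw [show (Tmat q n1 t u).col j = (Tmat q n1 t u).transpose j from rfl, hcol]
        exact Submodule.subset_span
          ⟨⟨⟨q + (j : ℕ) - n1, hiq⟩, by simp only [Fin.val_mk]; omega⟩, rfl⟩
      · by_cases h2 : (j : ℕ) < u
        · have hiq : q - t - 1 - (j : ℕ) < q := by omega
          have hcol : (Tmat q n1 t u).transpose j = Pi.single (⟨q - t - 1 - (j : ℕ), hiq⟩ : Fin q) 1 := by
            funext i'
            simp only [Tmat, Matrix.transpose_apply, Matrix.of_apply, Pi.single_apply]
            rw [if_congr (show _ ↔ i' = (⟨q - t - 1 - (j : ℕ), hiq⟩ : Fin q) from by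
              rw [Fin.ext_iff]; simp only [Fin.val_mk]; omega) rfl rfl]
          rw [show (Tmat q n1 t u).col j = (Tmat q n1 t u).transpose j from rfl, hcol]
          exact Submodule.subset_span
            ⟨⟨⟨q - t - 1 - (j : ℕ), hiq⟩, by simp only [Fin.val_mk]; omega⟩, rfl⟩
        · have hcol : (Tmat q n1 t u).transpose j = 0 := by
            funext i'
            simp only [Tmat, Matrix.transpose_apply, Matrix.of_apply, Pi.zero_apply]
            rw [if_neg]
            rintro (⟨a, b, c⟩ | ⟨a, b⟩)
            exacts [h1 ⟨a, b⟩, h2 a]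
          rw [show (Tmat q n1 t u).col j = (Tmat q n1 t u).transpose j from rfl, hcol]
          exact Submodule.zero_mem _
    · rw [Submodule.span_le]
      rintro _ ⟨⟨i, hi⟩, rfl⟩
      by_cases h1 : q ≤ (i : ℕ) + t
      · have hjq : (i : ℕ) + n1 - q < q := by have := i.isLt; omega
        refine Submodule.subset_span ⟨⟨(i : ℕ) + n1 - q, hjq⟩, ?_⟩
        funext i'
        simp only [Tmat, Matrix.col_apply, Matrix.of_apply, Pi.single_apply]
        rw [if_congr (show _ ↔ i' = i from by
          simp only [Fin.ext_iff, Fin.val_mk]; have := i.isLt; have := i'.isLt; omega)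
          rfl rfl]
      · have hjq : q - t - 1 - (i : ℕ) < q := by omega
        refine Submodule.subset_span ⟨⟨q - t - 1 - (i : ℕ), hjq⟩, ?_⟩
        funext i'
        simp only [Tmat, Matrix.col_apply, Matrix.of_apply, Pi.single_apply]
        rw [if_congr (show _ ↔ i' = i from by
          simp only [Fin.ext_iff, Fin.val_mk]; have := i.isLt; have := i'.isLt; omega)
          rfl rfl]
  have hli : LinearIndependent (ZMod 2)
      (fun x : {i : Fin q // q ≤ (i : ℕ) + r} =>
        (Pi.single x.1 (1 : ZMod 2) : Fin q → ZMod 2)) := by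
    have h := (Pi.basisFun (ZMod 2) (Fin q)).linearIndependent
    have h2 := h.comp (Subtype.val : {i : Fin q // q ≤ (i : ℕ) + r} → Fin q)
      Subtype.val_injective
    simpa [Function.comp_def] using h2
  have hcard : Fintype.card {i : Fin q // q ≤ (i : ℕ) + r} = r := by
    have e : {i : Fin q // q ≤ (i : ℕ) + r} ≃ Fin r :=
      { toFun := fun x => ⟨(x.1 : ℕ) + r - q, by have := x.1.isLt; have := x.2; omega⟩
        invFun := fun k => ⟨⟨q - r + (k : ℕ), by have := k.isLt; omega⟩,
          by simp only [Fin.val_mk]; have := k.isLt; omega⟩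
        left_inv := by
          rintro ⟨x, hx⟩
          ext
          simp only [Fin.val_mk]
          have := x.isLt
          omega
        right_inv := by
          rintro k
          ext
          simp only [Fin.val_mk]
          have := k.isLt
          omega }
    rw [Fintype.card_congr e, Fintype.card_fin]
  rw [Matrix.rank, key, finrank_span_eq_card hli, hcard]

end RateAux3



open RateAux3 in
/-- Case `n1 > n2`, `n4 ≥ n3`, `m ≤ n2`: the upper bound is achievable with `G_M = 0`. -/
theorem rate_achievable_case3
    (n1 n2 n3 n4 m q : ℕ) (hq : q = max n1 (max n2 (max n3 (max n4 m))))
    (h12 : n2 < n1) (h34 : n3 ≤ n4) (hm : m ≤ n2) :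
    ∃ GA GB : Matrix (Fin q) (Fin q) (ZMod 2),
      GMmat q n3 n4 m GA GB = 0 ∧
      linRate q (GSmat q n1 n2 n3 n4 GA GB) (GMmat q n3 n4 m GA GB)
        = min n1 (min n4 (n2 + n3 - m)) := by
  have hq1 : n1 ≤ q := by omega
  have hq2 : n2 ≤ q := by omega
  have hq3 : n3 ≤ q := by omega
  have hq4 : n4 ≤ q := by omega
  set t := min (n1 - n2 + m) n3 with ht
  set u := min (n2 - m) (n4 - t) with hu
  have ht1 : t ≤ n1 - n2 + m := min_le_left _ _
  have htn3 : t ≤ n3 := min_le_right _ _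
  have hu1 : u ≤ n2 - m := min_le_left _ _
  have hu2 : u ≤ n4 - t := min_le_right _ _
  have htu4 : t + u ≤ n4 := by omega
  have htu1 : t + u ≤ n1 := by omega
  set GA : Matrix (Fin q) (Fin q) (ZMod 2) := Matrix.of (fun i k : Fin q =>
      aFun q n1 n2 m t ((k : ℕ) - (q - n1)) ((i : ℕ) + (q - n3))) with hGA
  set GB : Matrix (Fin q) (Fin q) (ZMod 2) := Matrix.of (fun i k : Fin q =>
      bFun q n1 n2 m t u ((k : ℕ) - (q - n2)) ((i : ℕ) + (q - n4))) with hGB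
  have hGM : GMmat q n3 n4 m GA GB = 0 := by
    ext i j
    simp only [GMmat, hGA, hGB]
    rw [Matrix.add_apply, Matrix.zero_apply,
      triple_shift_apply q (q - n3) (q - m)
        (fun x y => aFun q n1 n2 m t (y - (q - n1)) (x + (q - n3))) i j,
      triple_shift_apply q (q - n4) (q - m)
        (fun x y => bFun q n1 n2 m t u (y - (q - n2)) (x + (q - n4))) i j]
    exact gm_entry hq1 hq2 hq3 hq4 h12 h34 hm htn3 htu4 htu1 hu1 (i : ℕ) (j : ℕ) i.isLt
  have hGS : GSmat q n1 n2 n3 n4 GA GB = Tmat q n1 t u := by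
    ext i j
    simp only [GSmat, hGA, hGB]
    rw [Matrix.add_apply,
      triple_shift_apply q (q - n3) (q - n1)
        (fun x y => aFun q n1 n2 m t (y - (q - n1)) (x + (q - n3))) i j,
      triple_shift_apply q (q - n4) (q - n2)
        (fun x y => bFun q n1 n2 m t u (y - (q - n2)) (x + (q - n4))) i j]
    exact gs_entry hq1 hq2 hq3 hq4 h12 h34 hm htn3 htu4 htu1 hu1 (i : ℕ) (j : ℕ) i.isLt
  refine ⟨GA, GB, hGM, ?_⟩
  unfold linRate
  rw [hGM, hGS, Matrix.mulVecLin_zero, LinearMap.range_zero, inf_bot_eq, finrank_bot,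
    Nat.sub_zero, Tmat_rank hq1 htu1]
  omega
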